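/- Let M be a commutative nonassociative algebra over a field F of characteristic not 2, and let a ∈ M be an idempotent whose left-multiplication operator ad_a is semisimple with eigenvalues contained in {1, 0, ξ, η} (ξ, η distinct elements of F \ {0,1}), such that the 1-eigenspace is Fa and the eigenspaces obey the fusion rule F(ξ,η) (in particular the 0-eigenspace multiplies every α-eigenspace into the α-eigenspace for each α ∈ {0,1,ξ,η}). Then the Seress condition holds at a: for all w ∈ M and all z in the 0-eigenspace of a, a(wz) = (aw)z. -/

import Mathlib

/-- The `α`-eigenspace of the left-multiplication operator of `a`. -/
noncomputable def esp {F M : Type*} [Field F] [NonUnitalNonAssocCommRing M]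
    [Module F M] [SMulCommClass F M M] [IsScalarTower F M M] (a : M) (α : F) :
    Submodule F M :=
  Module.End.eigenspace (LinearMap.mul F M a) α

/-- the Seress condition holds at an axis of Majorana type. -/
theorem stmt0 {F M : Type*} [Field F] [NonUnitalNonAssocCommRing M]
    [Module F M] [SMulCommClass F M M] [IsScalarTower F M M]
    (hchar : (2 : F) ≠ 0) (ξ η : F)
    (hξ0 : ξ ≠ 0) (hξ1 : ξ ≠ 1) (hη0 : η ≠ 0) (hη1 : η ≠ 1) (hξη : ξ ≠ η)
    (a : M) (hidem : a * a = a)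
    (hprim : esp a (1 : F) = Submodule.span F {a})
    (hdecomp : esp a (1 : F) ⊔ esp a (0 : F) ⊔ esp a ξ ⊔ esp a η = ⊤)
    (hfus0 : ∀ α ∈ ({0, 1, ξ, η} : Set F),
      ∀ x ∈ esp a (0 : F), ∀ y ∈ esp a α, x * y ∈ esp a α)
    (hfus1ξ : ∀ x ∈ esp a (1 : F), ∀ y ∈ esp a ξ, x * y ∈ esp a ξ)
    (hfus1η : ∀ x ∈ esp a (1 : F), ∀ y ∈ esp a η, x * y ∈ esp a η)
    (hfusξξ : ∀ x ∈ esp a ξ, ∀ y ∈ esp a ξ, x * y ∈ esp a (0 : F) ⊔ esp a (1 : F))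
    (hfusξη : ∀ x ∈ esp a ξ, ∀ y ∈ esp a η, x * y ∈ esp a η)
    (hfusηη : ∀ x ∈ esp a η, ∀ y ∈ esp a η,
      x * y ∈ esp a (0 : F) ⊔ esp a (1 : F) ⊔ esp a ξ) :
    ∀ w : M, ∀ z ∈ esp a (0 : F), a * (w * z) = (a * w) * z := by
  intro w z hz
  set L : M →ₗ[F] M :=
    (LinearMap.mul F M a).comp ((LinearMap.mul F M).flip z)
      - ((LinearMap.mul F M).flip z).comp (LinearMap.mul F M a) with hL
  suffices h : ∀ α ∈ ({0, 1, ξ, η} : Set F), esp a α ≤ LinearMap.ker L by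
    have htop : (⊤ : Submodule F M) ≤ LinearMap.ker L := by
      rw [← hdecomp]
      refine sup_le (sup_le (sup_le ?_ ?_) ?_) ?_ <;> apply h <;> simp
    have hw := LinearMap.mem_ker.mp (htop (Submodule.mem_top : w ∈ ⊤))
    have : a * (w * z) - (a * w) * z = 0 := by simpa [hL, mul_comm w z, mul_comm (a * w) z] using hw
    exact sub_eq_zero.mp this
  intro α hα x hx
  have hax : a * x = α • x := Module.End.mem_eigenspace_iff.mp hx
  have hzx : z * x ∈ esp a α := hfus0 α hα z hz x hx
  have hzx' : a * (z * x) = α • (z * x) := Module.End.mem_eigenspace_iff.mp hzx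
  rw [LinearMap.mem_ker]
  have : a * (x * z) - (a * x) * z = 0 := by
    rw [hax, smul_mul_assoc, mul_comm x z, hzx', mul_comm z x, sub_self]
  simpa [hL, mul_comm x z, mul_comm (a * x) z] using this
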